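/- Let L be a compact positive self-adjoint operator on a separable Hilbert space, and let {η_i} be a sequence of positive step-sizes with η_1 ‖L‖ ≤ 1 and η_i nonincreasing. For t ∈ ℕ, a non-negative integer k ≤ t-1, λ > 0, and 0 < ζ ≤ 1, define Π_{k+1}^t(L) = ∏_{i=k+1}^{t}(I - η_i L). Then ‖Π_{k+1}^t(L) (L + λ I)^{ζ}‖ ≤ (ζ / (e ∑_{i=k+1}^{t} η_i))^{ζ} + λ^{ζ}. -/

import Mathlib

open Finset ContinuousLinearMap

/-- The ordered product Π_{i=a}^{b} f i of operators (identity if a > b). -/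
noncomputable def opProd {H : Type*} [NormedAddCommGroup H] [InnerProductSpace ℂ H]
    [CompleteSpace H] (f : ℕ → (H →L[ℂ] H)) (a b : ℕ) : H →L[ℂ] H :=
  ((List.range (b + 1 - a)).map fun j => f (a + j)).prod

/-- `(x+y)^p ≤ x^p + y^p` for `0 ≤ p ≤ 1`. -/
lemma aux_rpow_add_le_add {x y p : ℝ} (hx : 0 ≤ x) (hy : 0 ≤ y) (hp : 0 ≤ p) (hp1 : p ≤ 1) :
    (x + y) ^ p ≤ x ^ p + y ^ p := by
  have h := NNReal.rpow_add_le_add_rpow x.toNNReal y.toNNReal hp hp1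
  have h1 : ((x.toNNReal + y.toNNReal : NNReal) : ℝ) = x + y := by
    simp [Real.coe_toNNReal, hx, hy]
  calc (x + y) ^ p = (((x.toNNReal + y.toNNReal : NNReal) : ℝ)) ^ p := by rw [h1]
    _ = (((x.toNNReal + y.toNNReal) ^ p : NNReal) : ℝ) := (NNReal.coe_rpow _ _).symm
    _ ≤ ((x.toNNReal ^ p + y.toNNReal ^ p : NNReal) : ℝ) := by exact_mod_cast h
    _ = x ^ p + y ^ p := by
        push_cast [NNReal.coe_rpow]
        rw [Real.coe_toNNReal _ hx, Real.coe_toNNReal _ hy]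

/-- `exp(-(S x)) x^ζ ≤ (ζ/(e S))^ζ`. -/
lemma aux_exp_rpow_bound {S x ζ : ℝ} (hS : 0 < S) (hx : 0 ≤ x) (hζ : 0 < ζ) :
    Real.exp (-(S * x)) * x ^ ζ ≤ (ζ / (Real.exp 1 * S)) ^ ζ := by
  rcases hx.eq_or_lt with h | hxpos
  · rw [← h, Real.zero_rpow hζ.ne', mul_zero]
    positivity
  · have hkey : S * x / ζ ≤ Real.exp (S * x / ζ - 1) := by
      have := Real.add_one_le_exp (S * x / ζ - 1); linarith
    have h1 : x ^ ζ ≤ (ζ / S) ^ ζ * Real.exp (S * x - ζ) := by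
      have hx_eq : x = (ζ / S) * (S * x / ζ) := by field_simp
      calc x ^ ζ = ((ζ / S) * (S * x / ζ)) ^ ζ := by rw [← hx_eq]
        _ = (ζ / S) ^ ζ * (S * x / ζ) ^ ζ := Real.mul_rpow (by positivity) (by positivity)
        _ ≤ (ζ / S) ^ ζ * (Real.exp (S * x / ζ - 1)) ^ ζ := by
            exact mul_le_mul_of_nonneg_left
              (Real.rpow_le_rpow (by positivity) hkey hζ.le) (by positivity)
        _ = (ζ / S) ^ ζ * Real.exp (S * x - ζ) := by
            rw [← Real.exp_mul]
            congr 1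
            field_simp
    calc Real.exp (-(S * x)) * x ^ ζ
        ≤ Real.exp (-(S * x)) * ((ζ / S) ^ ζ * Real.exp (S * x - ζ)) :=
          mul_le_mul_of_nonneg_left h1 (Real.exp_pos _).le
      _ = (ζ / S) ^ ζ * Real.exp (-ζ) := by
          rw [mul_left_comm, mul_comm (Real.exp (-(S * x))), ← Real.exp_add]
          congr 1
          ring
      _ = (ζ / (Real.exp 1 * S)) ^ ζ := by
          rw [show ζ / (Real.exp 1 * S) = (ζ / S) / Real.exp 1 by ring,
            Real.div_rpow (by positivity) (Real.exp_pos 1).le, Real.exp_one_rpow,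
            Real.exp_neg, div_eq_mul_inv]
          ring

/-- Product of `cfc`'s of continuous functions is the `cfc` of the pointwise product. -/
lemma aux_cfc_list_prod {H : Type*} [NormedAddCommGroup H] [InnerProductSpace ℂ H]
    [CompleteSpace H] (L : H →L[ℂ] H) (hL : IsSelfAdjoint L)
    (g : ℕ → ℝ → ℝ) (hg : ∀ j, Continuous (g j)) :
    ∀ n : ℕ, ((List.range n).map fun j => cfc (g j) L).prod =
      cfc (fun x : ℝ => ∏ j ∈ Finset.range n, g j x) L := by
  intro n
  induction n with
  | zero => simp [cfc_const_one ℝ L hL]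
  | succ n ih =>
      rw [List.range_succ, List.map_append, List.prod_append, List.map_singleton,
        List.prod_singleton, ih, ← cfc_mul _ _ L
          ((continuous_finset_prod _ fun j _ => hg j).continuousOn) (hg n).continuousOn]
      simp [Finset.prod_range_succ]

set_option maxHeartbeats 1000000 in
/-- Spectral bound for gradient-descent products: let L be a compact positive operator
    on a separable Hilbert space, η a nonincreasing positive step-size sequence with
    η₁‖L‖ ≤ 1.  Then for k ≤ t-1, λ > 0 and 0 < ζ ≤ 1,
    ‖Π_{i=k+1}^t (I - η_i L) (L + λI)^ζ‖ ≤ (ζ/(e ∑_{i=k+1}^t η_i))^ζ + λ^ζ. -/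
theorem gradient_product_power_bound
    {H : Type*} [NormedAddCommGroup H] [InnerProductSpace ℂ H] [CompleteSpace H]
    [TopologicalSpace.SeparableSpace H]
    (L : H →L[ℂ] H) (hL : L.IsPositive) (hLcompact : IsCompactOperator (⇑L))
    (η : ℕ → ℝ) (hηpos : ∀ i, 0 < η i) (hηmono : ∀ i j, i ≤ j → η j ≤ η i)
    (hη1 : η 1 * ‖L‖ ≤ 1)
    (t : ℕ) (ht : 1 ≤ t) (k : ℕ) (hk : k ≤ t - 1)
    (lam : ℝ) (hlam : 0 < lam) (ζ : ℝ) (hζ0 : 0 < ζ) (hζ1 : ζ ≤ 1) :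
    ‖opProd (fun i => 1 - η i • L) (k + 1) t ∘L
        cfc (fun x : ℝ => x ^ ζ) (L + lam • 1)‖ ≤
      (ζ / (Real.exp 1 * ∑ i ∈ Finset.Icc (k + 1) t, η i)) ^ ζ + lam ^ ζ := by
  have hkt : k + 1 ≤ t := by omega
  set S := ∑ i ∈ Finset.Icc (k + 1) t, η i with hSdef
  set n := t + 1 - (k + 1) with hndef
  have hn1 : 1 ≤ n := by omega
  have hSr : S = ∑ j ∈ Finset.range n, η (k + 1 + j) := by
    rw [hSdef, ← Finset.Ico_add_one_right_eq_Icc, Finset.sum_Ico_eq_sum_range]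
  have hSpos : 0 < S := by
    rw [hSr]
    exact Finset.sum_pos (fun j _ => hηpos _) (Finset.nonempty_range_iff.mpr (by omega))
  have hRHS0 : (0:ℝ) ≤ (ζ / (Real.exp 1 * S)) ^ ζ + lam ^ ζ := by positivity
  obtain hH | hH := subsingleton_or_nontrivial H
  · have hsub : Subsingleton (H →L[ℂ] H) :=
      ⟨fun a b => ContinuousLinearMap.ext fun x => Subsingleton.elim _ _⟩
    rw [Subsingleton.elim (opProd (fun i => 1 - η i • L) (k + 1) t ∘L
      cfc (fun x : ℝ => x ^ ζ) (L + lam • 1)) (0 : H →L[ℂ] H), norm_zero]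
    exact hRHS0
  have hLsa : IsSelfAdjoint L := hL.isSelfAdjoint
  have hspec0 : ∀ x ∈ spectrum ℝ L, 0 ≤ x :=
    SpectrumRestricts.nnreal_iff.mp hL.spectrumRestricts
  have hspecN : ∀ x ∈ spectrum ℝ L, x ≤ ‖L‖ := fun x hx =>
    (le_abs_self x).trans ((Real.norm_eq_abs x) ▸ spectrum.norm_le_norm_of_mem hx)
  -- the polynomial part
  set P : ℝ → ℝ := fun x => ∏ j ∈ Finset.range n, (1 - η (k + 1 + j) * x) with hPdef
  have hPcont : Continuous P := continuous_finset_prod _ fun j _ => by fun_prop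
  have hfact : ∀ i : ℕ, (1 - η i • L : H →L[ℂ] H) = cfc (fun x : ℝ => 1 - η i * x) L := by
    intro i
    rw [cfc_sub _ _ L (by fun_prop) (by fun_prop), cfc_const_one ℝ L hLsa,
      cfc_const_mul (η i) (fun x : ℝ => x) L (by fun_prop), cfc_id' ℝ L hLsa]
  have hprod : opProd (fun i => 1 - η i • L) (k + 1) t = cfc P L := by
    unfold opProd
    have := aux_cfc_list_prod L hLsa (fun j x => 1 - η (k + 1 + j) * x)
      (fun j => by fun_prop) n
    simp only [hfact]
    exact this
  -- the rpow part
  have hQcont : ContinuousOn (fun x : ℝ => (x + lam) ^ ζ) (spectrum ℝ L) := by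
    intro x hx
    have hx0 := hspec0 x hx
    exact (((continuousAt_id.add continuousAt_const).rpow_const
      (Or.inl (by show x + lam ≠ 0; positivity)))).continuousWithinAt
  have hL1 : L + lam • 1 = cfc (fun x : ℝ => x + lam) L := by
    rw [cfc_add_const lam (fun x : ℝ => x) L (by fun_prop) hLsa, cfc_id' ℝ L hLsa,
      Algebra.algebraMap_eq_smul_one]
  have hcomp : cfc (fun x : ℝ => x ^ ζ) (L + lam • 1) =
      cfc (fun x : ℝ => (x + lam) ^ ζ) L := by
    rw [hL1]
    refine (cfc_comp' (fun x : ℝ => x ^ ζ) (fun x : ℝ => x + lam) L ?_ (by fun_prop) hLsa).symm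
    rintro y ⟨x, hx, rfl⟩
    have hx0 := hspec0 x hx
    exact ((Real.continuousAt_rpow_const (x + lam) ζ
      (Or.inl (by positivity)))).continuousWithinAt
  have heq : opProd (fun i => 1 - η i • L) (k + 1) t ∘L
      cfc (fun x : ℝ => x ^ ζ) (L + lam • 1) =
      cfc (fun x : ℝ => P x * (x + lam) ^ ζ) L := by
    rw [cfc_mul _ _ L hPcont.continuousOn hQcont, hprod, hcomp]
    rfl
  rw [heq]
  refine norm_cfc_le hRHS0 fun x hx => ?_
  have hx0 := hspec0 x hx
  have hxN := hspecN x hx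
  -- factors are in [0, 1] and below exp
  have hfac0 : ∀ j ∈ Finset.range n, 0 ≤ 1 - η (k + 1 + j) * x := by
    intro j _
    have : η (k + 1 + j) * x ≤ η 1 * ‖L‖ :=
      mul_le_mul (hηmono 1 (k + 1 + j) (by omega)) hxN hx0 (hηpos 1).le
    linarith
  have hP_le : P x ≤ Real.exp (-(S * x)) := by
    have : P x ≤ ∏ j ∈ Finset.range n, Real.exp (-(η (k + 1 + j) * x)) := by
      refine Finset.prod_le_prod hfac0 fun j _ => ?_
      have := Real.add_one_le_exp (-(η (k + 1 + j) * x)); linarith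
    refine this.trans (le_of_eq ?_)
    rw [← Real.exp_sum]
    congr 1
    rw [hSr, Finset.sum_mul]
    simp
  have hPnn : 0 ≤ P x := Finset.prod_nonneg hfac0
  have hQnn : (0:ℝ) ≤ (x + lam) ^ ζ := Real.rpow_nonneg (by positivity) ζ
  rw [Real.norm_eq_abs, abs_of_nonneg (mul_nonneg hPnn hQnn)]
  calc P x * (x + lam) ^ ζ
      ≤ Real.exp (-(S * x)) * (x ^ ζ + lam ^ ζ) := by
        refine mul_le_mul hP_le (aux_rpow_add_le_add hx0 hlam.le hζ0.le hζ1) hQnn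
          (Real.exp_pos _).le
    _ = Real.exp (-(S * x)) * x ^ ζ + Real.exp (-(S * x)) * lam ^ ζ := by ring
    _ ≤ (ζ / (Real.exp 1 * S)) ^ ζ + lam ^ ζ := by
        refine add_le_add (aux_exp_rpow_bound hSpos hx0 hζ0) ?_
        have h1 : Real.exp (-(S * x)) ≤ 1 :=
          Real.exp_le_one_iff.mpr (by nlinarith)
        exact mul_le_of_le_one_left (Real.rpow_nonneg hlam.le ζ) h1
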